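/- Let G(x) = [[x₂, x₁²],[x₁², x₂]] for x = (x₁,x₂) ∈ ℝ² and x̄ = (0,0). Then Robinson's CQ holds at x̄ (take d = (0,1), giving G(x̄)+DG(x̄)d = I ∈ int(S²₊)), but the span of {∇G₁₂(x), ∇G₂₂(x)} = {(2x₁, 0), (0,1)} has dimension 1 at x̄ and dimension 2 for every x with x₁ ≠ 0; hence the facial constant rank property fails at x̄. -/

import Mathlib

attribute [local instance] Matrix.normedAddCommGroup Matrix.normedSpace

/-- The constraint map `G(x) = [[x₂, x₁²], [x₁², x₂]]`. -/
noncomputable def G18 : ℝ × ℝ → Matrix (Fin 2) (Fin 2) ℝ :=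
  fun x => !![x.2, x.1 ^ 2; x.1 ^ 2, x.2]

lemma G18_eq : G18 = fun x : ℝ × ℝ =>
    x.2 • (1 : Matrix (Fin 2) (Fin 2) ℝ) + (x.1 * x.1) • !![(0:ℝ),1;1,0] := by
  funext x
  ext i j
  fin_cases i <;> fin_cases j <;> simp [G18, Matrix.one_apply, sq]

lemma csr0 (M : Matrix (Fin 2) (Fin 2) ℝ) :
    ((0 : ℝ × ℝ →L[ℝ] ℝ).smulRight M) = 0 := by
  apply ContinuousLinearMap.ext; intro v
  simp [ContinuousLinearMap.smulRight_apply]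

lemma hderiv : HasFDerivAt G18
    (((ContinuousLinearMap.snd ℝ ℝ ℝ).smulRight (1 : Matrix (Fin 2) (Fin 2) ℝ))) (0, 0) := by
  rw [G18_eq]
  have h1 : HasFDerivAt (fun x : ℝ × ℝ => x.2 • (1 : Matrix (Fin 2) (Fin 2) ℝ))
      ((ContinuousLinearMap.snd ℝ ℝ ℝ).smulRight (1 : Matrix (Fin 2) (Fin 2) ℝ)) (0, 0) :=
    (hasFDerivAt_snd).smul_const _
  have hf := HasFDerivAt.mul (𝕜 := ℝ) (hasFDerivAt_fst (p := ((0:ℝ),(0:ℝ))))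
      (hasFDerivAt_fst (p := ((0:ℝ),(0:ℝ))))
  have h2 := hf.smul_const (!![(0:ℝ),1;1,0])
  have h3 := h1.add h2
  refine h3.congr_fderiv ?_
  apply ContinuousLinearMap.ext; intro v
  simp [ContinuousLinearMap.smulRight_apply]
  exact congrArg (fun f : ℝ × ℝ →L[ℝ] Matrix (Fin 2) (Fin 2) ℝ => f v) (add_zero _)

/-- At `x̄ = (0,0)`: Robinson's CQ holds (with `d = (0,1)`,
`G(x̄) + DG(x̄)d ∈ int(S²₊)` i.e. is positive definite), but the span of
`{∇G₁₂(x), ∇G₂₂(x)} = {(2x₁, 0), (0, 1)}` has dimension 1 at `x̄` while having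
dimension 2 for every `x` with `x₁ ≠ 0`: the facial constant rank property fails. -/
theorem stmt18 :
    (G18 (0, 0) + fderiv ℝ G18 (0, 0) ((0 : ℝ), (1 : ℝ))).PosDef ∧
    Module.finrank ℝ
      (Submodule.span ℝ ({(2 * (0 : ℝ), (0 : ℝ)), ((0 : ℝ), (1 : ℝ))} : Set (ℝ × ℝ))) = 1 ∧
    ∀ x : ℝ × ℝ, x.1 ≠ 0 →
      Module.finrank ℝ
        (Submodule.span ℝ ({(2 * x.1, (0 : ℝ)), ((0 : ℝ), (1 : ℝ))} : Set (ℝ × ℝ))) = 2 := by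
  refine ⟨?_, ?_, ?_⟩
  · rw [hderiv.fderiv]
    have : G18 (0, 0) + ((ContinuousLinearMap.snd ℝ ℝ ℝ).smulRight
        (1 : Matrix (Fin 2) (Fin 2) ℝ)) ((0 : ℝ), (1 : ℝ)) = 1 := by
      ext i j
      fin_cases i <;> fin_cases j <;> simp [G18, Matrix.one_apply]
    rw [this]
    exact Matrix.PosDef.one
  · have h : ({(2 * (0 : ℝ), (0 : ℝ)), ((0 : ℝ), (1 : ℝ))} : Set (ℝ × ℝ)) =
        insert (0 : ℝ × ℝ) {((0 : ℝ), (1 : ℝ))} := by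
      norm_num
      rfl
    rw [h, Submodule.span_insert_zero, finrank_span_singleton]
    simp [Prod.ext_iff]
  · intro x hx
    have htop : Submodule.span ℝ ({(2 * x.1, (0 : ℝ)), ((0 : ℝ), (1 : ℝ))} : Set (ℝ × ℝ)) = ⊤ := by
      rw [eq_top_iff]
      rintro ⟨a, b⟩ -
      rw [Submodule.mem_span_pair]
      exact ⟨a / (2 * x.1), b, by
        simp [Prod.ext_iff]
        field_simp⟩
    rw [htop, finrank_top]
    simp
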